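/- Equivalence of the full and reduced feedback equations via an orthonormal range basis: let Q̄ ∈ ℝ^{q×q} be symmetric positive definite, S ∈ ℝ^{n×q}, P̂ ∈ ℝ^{n×n} symmetric positive semidefinite, Â ∈ ℝ^{n×n}, and let U₁ ∈ ℝ^{q×r} have orthonormal columns (U₁ᵀU₁ = I_r) whose column space equals the column space of Sᵀ. Then a matrix K̂ ∈ ℝ^{r×n} satisfies (U₁ᵀQ̄⁻¹U₁ + U₁ᵀQ̄⁻¹SᵀP̂SQ̄⁻¹U₁) K̂ = −U₁ᵀQ̄⁻¹SᵀP̂Â if and only if K̄ := Q̄⁻¹U₁K̂ satisfies (Q̄ + SᵀP̂S) K̄ = −SᵀP̂Â. -/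

import Mathlib

open Matrix

/-- Equivalence of the full and reduced feedback equations via an orthonormal basis
`U₁` of the column space of `Sᵀ`. -/
theorem full_reduced_feedback_equiv
    (n q r : ℕ)
    (Qbar : Matrix (Fin q) (Fin q) ℝ) (hQbar : Qbar.PosDef)
    (S : Matrix (Fin n) (Fin q) ℝ)
    (Ph : Matrix (Fin n) (Fin n) ℝ) (hPh : Ph.PosSemidef)
    (Ah : Matrix (Fin n) (Fin n) ℝ)
    (U₁ : Matrix (Fin q) (Fin r) ℝ)
    (hU₁ : U₁ᵀ * U₁ = 1)
    (hrange : Submodule.span ℝ (Set.range U₁ᵀ) = Submodule.span ℝ (Set.range S))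
    (Kh : Matrix (Fin r) (Fin n) ℝ) :
    (U₁ᵀ * Qbar⁻¹ * U₁ + U₁ᵀ * Qbar⁻¹ * Sᵀ * Ph * S * Qbar⁻¹ * U₁) * Kh
        = -(U₁ᵀ * Qbar⁻¹ * Sᵀ * Ph * Ah)
      ↔ (Qbar + Sᵀ * Ph * S) * (Qbar⁻¹ * U₁ * Kh) = -(Sᵀ * Ph * Ah) := by
  have hdet : IsUnit Qbar.det := hQbar.det_pos.ne'.isUnit
  have hQQi : Qbar * Qbar⁻¹ = 1 := Matrix.mul_nonsing_inv _ hdet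
  have hQiQ : Qbar⁻¹ * Qbar = 1 := Matrix.nonsing_inv_mul _ hdet
  set X : Matrix (Fin q) (Fin n) ℝ :=
    (Qbar + Sᵀ * Ph * S) * (Qbar⁻¹ * U₁ * Kh) + Sᵀ * Ph * Ah with hX
  -- the RHS equation is `X = 0`
  have hRHS : ((Qbar + Sᵀ * Ph * S) * (Qbar⁻¹ * U₁ * Kh) = -(Sᵀ * Ph * Ah)) ↔ X = 0 := by
    rw [hX]; exact eq_neg_iff_add_eq_zero
  -- the LHS equation is `U₁ᵀ * Qbar⁻¹ * X = 0`
  have hexp : U₁ᵀ * Qbar⁻¹ * X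
      = (U₁ᵀ * Qbar⁻¹ * U₁ + U₁ᵀ * Qbar⁻¹ * Sᵀ * Ph * S * Qbar⁻¹ * U₁) * Kh
        + U₁ᵀ * Qbar⁻¹ * Sᵀ * Ph * Ah := by
    rw [hX]
    simp only [Matrix.mul_add, Matrix.add_mul, Matrix.mul_assoc]
    rw [← Matrix.mul_assoc Qbar⁻¹ Qbar, hQiQ, Matrix.one_mul]
  have hLHS : ((U₁ᵀ * Qbar⁻¹ * U₁ + U₁ᵀ * Qbar⁻¹ * Sᵀ * Ph * S * Qbar⁻¹ * U₁) * Kh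
      = -(U₁ᵀ * Qbar⁻¹ * Sᵀ * Ph * Ah)) ↔ U₁ᵀ * Qbar⁻¹ * X = 0 := by
    rw [hexp]; exact eq_neg_iff_add_eq_zero.symm.symm
  rw [hLHS, hRHS]
  constructor
  · -- hard direction: columns of X lie in the column space of U₁
    intro h
    have hX2 : X = U₁ * Kh + Sᵀ * (Ph * S * (Qbar⁻¹ * U₁ * Kh) + Ph * Ah) := by
      rw [hX]
      simp only [Matrix.add_mul, Matrix.mul_add, Matrix.mul_assoc]
      rw [← Matrix.mul_assoc Qbar Qbar⁻¹, hQQi, Matrix.one_mul]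
      abel
    -- every column of X is in the span of the rows of U₁ᵀ
    have hcol : ∀ j : Fin n, (fun i => X i j) ∈ Submodule.span ℝ (Set.range U₁ᵀ) := by
      intro j
      have hXcol : (fun i => X i j)
          = U₁ *ᵥ (fun k => Kh k j)
            + Sᵀ *ᵥ (fun k => (Ph * S * (Qbar⁻¹ * U₁ * Kh) + Ph * Ah) k j) := by
        funext i
        have := congrFun (congrFun hX2 i) j
        rw [this]
        simp [Matrix.mulVec, dotProduct, Matrix.mul_apply, Matrix.add_apply]
      rw [hXcol]
      apply Submodule.add_mem
      · have : U₁ *ᵥ (fun k => Kh k j) ∈ LinearMap.range U₁ᵀ.vecMulLinear :=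
          ⟨(fun k => Kh k j), by simp [Matrix.vecMul_transpose]⟩
        rwa [range_vecMulLinear] at this
      · have : Sᵀ *ᵥ (fun k => (Ph * S * (Qbar⁻¹ * U₁ * Kh) + Ph * Ah) k j)
            ∈ LinearMap.range S.vecMulLinear :=
          ⟨(fun k => (Ph * S * (Qbar⁻¹ * U₁ * Kh) + Ph * Ah) k j),
            by simp [Matrix.mulVec_transpose]⟩
        rw [range_vecMulLinear] at this
        rwa [hrange]
    -- now conclude X = 0 columnwise
    funext i j
    have hmem := hcol j
    replace hmem : (fun i => X i j) ∈ LinearMap.range U₁ᵀ.vecMulLinear := by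
      rw [range_vecMulLinear]; exact hmem
    obtain ⟨c, hc⟩ := hmem
    simp only [Matrix.vecMulLinear_apply, Matrix.vecMul_transpose] at hc
    have h0 : U₁ᵀ *ᵥ (Qbar⁻¹ *ᵥ (fun i => X i j)) = 0 := by
      have hcolv : (fun i => X i j) = X *ᵥ Pi.single j 1 := by
        funext i; simp [Matrix.mulVec_single]
      rw [hcolv, Matrix.mulVec_mulVec, Matrix.mulVec_mulVec, h, Matrix.zero_mulVec]
    have hv0 : U₁ *ᵥ c = 0 := by
      by_contra hv
      have hpos := hQbar.inv.dotProduct_mulVec_pos (x := U₁ *ᵥ c) hv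
      have hzero : star (U₁ *ᵥ c) ⬝ᵥ Qbar⁻¹ *ᵥ (U₁ *ᵥ c) = 0 := by
        have hdz : c ⬝ᵥ (U₁ᵀ *ᵥ (Qbar⁻¹ *ᵥ (fun i => X i j))) = 0 := by
          rw [h0]; simp
        rw [Matrix.dotProduct_mulVec, Matrix.vecMul_transpose, hc] at hdz
        simpa [hc] using hdz
      rw [hzero] at hpos
      exact lt_irrefl 0 hpos
    have : (fun i => X i j) = 0 := by rw [← hc, hv0]
    exact congrFun this i
  · intro h
    rw [h, Matrix.mul_zero]
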